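/- Let ‖·‖ be a norm on ℝ^d, let S be a finite collection of subsets of ℝ^d, each with at least 2 elements, and let H(S) = (ℝ^d, E(S)) be the hypergraph where E(S) = {T ⊆ ℝ^d : T is congruent in (ℝ^d, ‖·‖) to some member of S}. Then χ(H(S)) < ∞. -/

import Mathlib

/-- A proper coloring of a hypergraph with edge set `E`: no edge is monochromatic. -/
def IsProperColoring {V : Type} {C : Type} (E : Set (Set V)) (φ : V → C) : Prop :=
  ∀ e ∈ E, ∃ x ∈ e, ∃ y ∈ e, φ x ≠ φ y

/-- The chromatic number of a hypergraph with vertex type `V` and edge set `E`. -/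
noncomputable def chromNum {V : Type} (E : Set (Set V)) : Cardinal :=
  sInf {c : Cardinal | ∃ (C : Type) (φ : V → C), Cardinal.mk C = c ∧ IsProperColoring E φ}

/-- Congruence in `(ℝ^d, ‖·‖)` where the norm is given by `N`: one set is the image of the
other under the composition of a surjective linear isometry of `(ℝ^d, N)` and a translation. -/
def NormCongruent (d : ℕ) (N : Seminorm ℝ (Fin d → ℝ)) (X Y : Set (Fin d → ℝ)) : Prop :=
  ∃ (f : (Fin d → ℝ) →ₗ[ℝ] (Fin d → ℝ)) (v : Fin d → ℝ),
    Function.Surjective f ∧ (∀ x, N (f x) = N x) ∧ Y = (fun x => f x + v) '' X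

lemma seminorm_sum_le {E : Type*} [AddCommGroup E] [Module ℝ E] (N : Seminorm ℝ E)
    {ι : Type*} (s : Finset ι) (g : ι → E) :
    N (∑ i ∈ s, g i) ≤ ∑ i ∈ s, N (g i) := by
  classical
  induction s using Finset.induction with
  | empty => simp
  | insert _ _ h ih =>
    rw [Finset.sum_insert h, Finset.sum_insert h]
    exact (map_add_le_add N _ _).trans (by linarith)

/-- Every norm on `ℝ^d` is equivalent to the sup norm. -/
lemma exists_norm_bounds (d : ℕ) (N : Seminorm ℝ (Fin d → ℝ))
    (hN : ∀ x : Fin d → ℝ, N x = 0 → x = 0) :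
    ∃ c C : ℝ, 0 < c ∧ 0 < C ∧ ∀ x, c * ‖x‖ ≤ N x ∧ N x ≤ C * ‖x‖ := by
  rcases Nat.eq_zero_or_pos d with hd | hd
  · subst hd
    refine ⟨1, 1, one_pos, one_pos, fun x => ?_⟩
    have hx : x = 0 := Subsingleton.elim x 0
    have h0 : N x = 0 := by rw [hx]; exact map_zero N
    have h1 : ‖x‖ = 0 := by rw [hx]; exact norm_zero
    rw [h0, h1]; norm_num
  -- upper bound
  set C0 : ℝ := ∑ i : Fin d, N (Pi.single i 1) with hC0def
  have hC0 : 0 ≤ C0 := Finset.sum_nonneg fun i _ => apply_nonneg N _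
  have hupper : ∀ x, N x ≤ (C0 + 1) * ‖x‖ := by
    intro x
    have hx : x = ∑ i : Fin d, Pi.single i (x i) := (Finset.univ_sum_single x).symm
    have h1 : N x ≤ ∑ i : Fin d, N (Pi.single i (x i)) := by
      conv_lhs => rw [hx]
      exact seminorm_sum_le N _ _
    have h2 : ∀ i : Fin d, N (Pi.single i (x i)) ≤ ‖x‖ * N (Pi.single i 1) := by
      intro i
      have hsingle : Pi.single i (x i) = x i • (Pi.single i 1 : Fin d → ℝ) := by
        rw [← Pi.single_smul, smul_eq_mul, mul_one]
      rw [hsingle, map_smul_eq_mul]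
      have hle : ‖x i‖ ≤ ‖x‖ := norm_le_pi_norm x i
      exact mul_le_mul_of_nonneg_right hle (apply_nonneg N _)
    have h3 : N x ≤ ‖x‖ * C0 := by
      refine h1.trans ?_
      rw [hC0def, Finset.mul_sum]
      exact Finset.sum_le_sum fun i _ => h2 i
    nlinarith [norm_nonneg x]
  -- continuity of N
  have hcont : Continuous fun x => N x := by
    refine Seminorm.continuous (r := 1) ?_
    have hsub : Metric.ball (0 : Fin d → ℝ) (1 / (C0 + 1)) ⊆ N.ball 0 1 := by
      intro x hx
      rw [Metric.mem_ball, dist_zero_right] at hx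
      rw [Seminorm.mem_ball, sub_zero]
      calc N x ≤ (C0 + 1) * ‖x‖ := hupper x
        _ < (C0 + 1) * (1 / (C0 + 1)) := mul_lt_mul_of_pos_left hx (by linarith)
        _ = 1 := by field_simp
    exact Filter.mem_of_superset (Metric.ball_mem_nhds 0 (by positivity)) hsub
  -- lower bound via compactness
  have hne : (Metric.sphere (0 : Fin d → ℝ) 1).Nonempty := by
    haveI : Nonempty (Fin d) := ⟨⟨0, hd⟩⟩
    refine ⟨fun _ => 1, ?_⟩
    simp [pi_norm_const]
  obtain ⟨z, hz, hzmin'⟩ := (isCompact_sphere (0 : Fin d → ℝ) 1).exists_isMinOn hne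
    hcont.continuousOn
  have hzmin : ∀ w ∈ Metric.sphere (0 : Fin d → ℝ) 1, N z ≤ N w := fun w hw => hzmin' hw
  have hz1 : ‖z‖ = 1 := by simpa using hz
  have hzpos : 0 < N z := by
    rcases (apply_nonneg N z).lt_or_eq with h | h
    · exact h
    · exfalso
      have hz0 := hN z h.symm
      rw [hz0] at hz1
      simp at hz1
  refine ⟨N z, C0 + 1, hzpos, by linarith, fun x => ⟨?_, hupper x⟩⟩
  rcases eq_or_ne x 0 with rfl | hx0
  · simp
  · have hxn : 0 < ‖x‖ := norm_pos_iff.mpr hx0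
    have hmem : (‖x‖⁻¹ • x) ∈ Metric.sphere (0 : Fin d → ℝ) 1 := by
      simp [norm_smul, abs_of_pos (inv_pos.mpr hxn), inv_mul_cancel₀ hxn.ne']
    have hmin := hzmin _ hmem
    rw [map_smul_eq_mul] at hmin
    have hinv : ‖(‖x‖⁻¹ : ℝ)‖ = ‖x‖⁻¹ := by
      rw [Real.norm_eq_abs, abs_of_pos (inv_pos.mpr hxn)]
    rw [hinv] at hmin
    calc N z * ‖x‖ ≤ (‖x‖⁻¹ * N x) * ‖x‖ := mul_le_mul_of_nonneg_right hmin hxn.le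
      _ = N x := by field_simp

lemma coord_lemma (a : ℝ) (ha : 0 < a) (m : ℕ) (x y : ℝ)
    (h : ((⌊x / a⌋ : ℤ) : ZMod (m + 2)) = ((⌊y / a⌋ : ℤ) : ZMod (m + 2))) :
    |x - y| < a ∨ (m + 1 : ℝ) * a < |x - y| := by
  set p : ℤ := ⌊x / a⌋ with hp
  set q : ℤ := ⌊y / a⌋ with hq
  have hdvd : ((m + 2 : ℕ) : ℤ) ∣ q - p := ((ZMod.intCast_eq_intCast_iff _ _ _).1 h).dvd
  have hb1 : (p : ℝ) ≤ x / a := Int.floor_le _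
  have hb2 : x / a < p + 1 := Int.lt_floor_add_one _
  have hb3 : (q : ℝ) ≤ y / a := Int.floor_le _
  have hb4 : y / a < q + 1 := Int.lt_floor_add_one _
  have hxy : x - y = (x / a - y / a) * a := by field_simp
  rcases eq_or_ne p q with heq | hne
  · left
    rw [heq] at hb1 hb2
    have h1 : |x / a - y / a| < 1 := abs_lt.2 ⟨by linarith, by linarith⟩
    calc |x - y| = |x / a - y / a| * a := by rw [hxy, abs_mul, abs_of_pos ha]
      _ < 1 * a := mul_lt_mul_of_pos_right h1 ha
      _ = a := one_mul a
  · right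
    have hk : ((m : ℤ) + 2) ≤ |q - p| := by
      have hle := Int.le_of_dvd (abs_pos.2 (sub_ne_zero.2 (Ne.symm hne))) ((dvd_abs _ _).2 hdvd)
      exact_mod_cast hle
    have hkR : (m : ℝ) + 2 ≤ |(q : ℝ) - (p : ℝ)| := by exact_mod_cast hk
    have hgt : (m : ℝ) + 1 < |x / a - y / a| := by
      rcases abs_cases ((q : ℝ) - (p : ℝ)) with ⟨he, _⟩ | ⟨he, _⟩
      · rw [he] at hkR
        have hlt : (m : ℝ) + 1 < y / a - x / a := by linarith
        calc (m : ℝ) + 1 < y / a - x / a := hlt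
          _ ≤ |x / a - y / a| := by rw [abs_sub_comm]; exact le_abs_self _
      · rw [he] at hkR
        have hlt : (m : ℝ) + 1 < x / a - y / a := by linarith
        exact hlt.trans_le (le_abs_self _)
    calc (m + 1 : ℝ) * a < |x / a - y / a| * a := mul_lt_mul_of_pos_right hgt ha
      _ = |x - y| := by rw [hxy, abs_mul, abs_of_pos ha]

/-- A grid coloring separating all pairs of points whose sup-norm distance lies in `[a, b]`. -/
lemma grid_coloring (d : ℕ) (a b : ℝ) (ha : 0 < a) :
    ∃ (m : ℕ) (φ : (Fin d → ℝ) → Fin d → ZMod (m + 2)),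
      ∀ u v : Fin d → ℝ, a ≤ ‖u - v‖ → ‖u - v‖ ≤ b → φ u ≠ φ v := by
  refine ⟨⌊b / a⌋₊, fun x i => ((⌊x i / a⌋ : ℤ) : ZMod _), fun u v h1 h2 hEq => ?_⟩
  have hm : b < ((⌊b / a⌋₊ : ℝ) + 1) * a := by
    rcases le_or_gt b 0 with hb | hb
    · nlinarith [Nat.cast_nonneg (α := ℝ) ⌊b / a⌋₊]
    · have hba : b / a < (⌊b / a⌋₊ : ℝ) + 1 := Nat.lt_floor_add_one _
      calc b = (b / a) * a := by field_simp
        _ < ((⌊b / a⌋₊ : ℝ) + 1) * a := mul_lt_mul_of_pos_right hba ha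
  have key : ∀ i, |u i - v i| < a := by
    intro i
    rcases coord_lemma a ha ⌊b / a⌋₊ (u i) (v i) (congrFun hEq i) with hlt | hgt
    · exact hlt
    · exfalso
      have hco : |u i - v i| ≤ ‖u - v‖ := by
        simpa [Real.norm_eq_abs] using norm_le_pi_norm (u - v) i
      linarith
  have hlt : ‖u - v‖ < a := by
    rw [pi_norm_lt_iff ha]
    intro i
    simpa [Real.norm_eq_abs] using key i
  linarith

/-- Lemma 4.2: if `S` is a finite collection of subsets of `(ℝ^d, ‖·‖)`, each with at
least 2 elements, then the hypergraph `H(S)` of all congruent copies of members of `S`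
has finite chromatic number. -/
theorem chromNum_normCongruenceEdges_lt_aleph0 (d : ℕ) (N : Seminorm ℝ (Fin d → ℝ))
    (hN : ∀ x : Fin d → ℝ, N x = 0 → x = 0)
    (S : Set (Set (Fin d → ℝ))) (hSfin : S.Finite) (hScard : ∀ T ∈ S, T.Nontrivial) :
    chromNum {e : Set (Fin d → ℝ) | ∃ T ∈ S, NormCongruent d N T e} < Cardinal.aleph0 := by
  classical
  obtain ⟨c, C, hc, hC, hbound⟩ := exists_norm_bounds d N hN
  choose p hp q hq hpq using fun T : ↥S => hScard T T.2
  have hr : ∀ T : ↥S, 0 < N (p T - q T) := by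
    intro T
    rcases (apply_nonneg N (p T - q T)).lt_or_eq with h | h
    · exact h
    · exact absurd (sub_eq_zero.1 (hN _ h.symm)) (hpq T)
  choose m φ hφ using fun T : ↥S =>
    grid_coloring d (N (p T - q T) / C) (N (p T - q T) / c) (div_pos (hr T) hC)
  haveI : Finite ↥S := hSfin.to_subtype
  haveI : ∀ T : ↥S, NeZero (m T + 2) := fun T => ⟨by omega⟩
  set Col : Type := ∀ T : ↥S, Fin d → ZMod (m T + 2) with hCol
  haveI : Finite Col := by
    rw [hCol]
    infer_instance
  have hproper : IsProperColoring {e : Set (Fin d → ℝ) | ∃ T ∈ S, NormCongruent d N T e}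
      (fun x : Fin d → ℝ => (fun T => φ T x : Col)) := by
    rintro e ⟨T, hT, f, v, hsurj, hiso, rfl⟩
    set T' : ↥S := ⟨T, hT⟩
    refine ⟨f (p T') + v, ⟨p T', hp T', rfl⟩, f (q T') + v, ⟨q T', hq T', rfl⟩, ?_⟩
    intro hEq
    have hfun : φ T' (f (p T') + v) = φ T' (f (q T') + v) := congrFun hEq T'
    have hsub : (f (p T') + v) - (f (q T') + v) = f (p T' - q T') := by
      rw [map_sub]; abel
    have hNval : N ((f (p T') + v) - (f (q T') + v)) = N (p T' - q T') := by
      rw [hsub, hiso]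
    have hb := hbound ((f (p T') + v) - (f (q T') + v))
    refine hφ T' (f (p T') + v) (f (q T') + v) ?_ ?_ hfun
    · rw [div_le_iff₀ hC]
      nlinarith [hb.2, hNval]
    · rw [le_div_iff₀ hc]
      nlinarith [hb.1, hNval]
  have hmem : Cardinal.mk Col ∈ {x : Cardinal | ∃ (C : Type) (φ : (Fin d → ℝ) → C),
      Cardinal.mk C = x ∧ IsProperColoring
        {e : Set (Fin d → ℝ) | ∃ T ∈ S, NormCongruent d N T e} φ} :=
    ⟨Col, _, rfl, hproper⟩
  exact lt_of_le_of_lt (csInf_le' hmem) (Cardinal.lt_aleph0_of_finite Col)
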